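/- Let v,k,r,λ,y be positive integers with y≥2, λ≥2, satisfying r(k−1)=λ(v−1) and (y−1)(r−1)=(k−1)(λ−1). Then v ≤ 2(y−1)·r²/gcd(r,λ)². (In fact v−1 = r(k−1)/λ < 2(y−1)r²/λ².) -/
import Mathlib

theorem stmt3 (v k r lam y : ℕ)
    (hv : 0 < v) (hk : 0 < k) (hr : 0 < r) (hlam : 2 ≤ lam) (hy : 2 ≤ y)
    (h1 : r * (k - 1) = lam * (v - 1))
    (h2 : (y - 1) * (r - 1) = (k - 1) * (lam - 1)) :
    (v : ℚ) ≤ 2 * ((y : ℚ) - 1) * (r : ℚ) ^ 2 / ((Nat.gcd r lam : ℚ)) ^ 2 := by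
  obtain ⟨g, hgdef⟩ : ∃ g, Nat.gcd r lam = g := ⟨_, rfl⟩
  rw [hgdef]
  have hg0 : 0 < g := hgdef ▸ Nat.gcd_pos_of_pos_left _ hr
  have hgr : g ≤ r := hgdef ▸ Nat.le_of_dvd hr (Nat.gcd_dvd_left _ _)
  have hgl : g ∣ lam := hgdef ▸ Nat.gcd_dvd_right r lam
  have hglr : g ∣ r := hgdef ▸ Nat.gcd_dvd_left r lam
  have h1' : (r : ℤ) * ((k : ℤ) - 1) = (lam : ℤ) * ((v : ℤ) - 1) := by
    have := congrArg (fun n : ℕ => (n : ℤ)) h1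
    push_cast [Nat.cast_sub hk, Nat.cast_sub hv] at this
    push_cast
    omega
  have h2' : ((y : ℤ) - 1) * ((r : ℤ) - 1) = ((k : ℤ) - 1) * ((lam : ℤ) - 1) := by
    have := congrArg (fun n : ℕ => (n : ℤ)) h2
    push_cast [Nat.cast_sub hk, Nat.cast_sub hr, Nat.cast_sub (le_of_lt hlam),
      Nat.cast_sub (le_of_lt hy)] at this
    omega
  have keyZ : (v : ℤ) * (g : ℤ) ^ 2 ≤ 2 * ((y : ℤ) - 1) * (r : ℤ) ^ 2 := by
    have hg0' : (1 : ℤ) ≤ (g : ℤ) := by exact_mod_cast hg0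
    have hgr' : (g : ℤ) ≤ (r : ℤ) := by exact_mod_cast hgr
    have hr1 : (1 : ℤ) ≤ (r : ℤ) := by exact_mod_cast hr
    have hl2 : (2 : ℤ) ≤ (lam : ℤ) := by exact_mod_cast hlam
    have hy2 : (2 : ℤ) ≤ (y : ℤ) := by exact_mod_cast hy
    have hv1 : (1 : ℤ) ≤ (v : ℤ) := by exact_mod_cast hv
    have hg2r2 : (g : ℤ) ^ 2 ≤ (r : ℤ) ^ 2 :=
      pow_le_pow_left₀ (by linarith) hgr' 2
    have hr2y : (r : ℤ) ^ 2 ≤ ((y : ℤ) - 1) * (r : ℤ) ^ 2 :=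
      le_mul_of_one_le_left (sq_nonneg _) (by linarith)
    rcases eq_or_lt_of_le hv1 with hve | hv2
    · -- v = 1
      rw [← hve, one_mul]
      linarith [hg2r2, hr2y, sq_nonneg (r : ℤ)]
    · -- v ≥ 2
      have E : (lam : ℤ) * (((lam : ℤ) - 1) * ((v : ℤ) - 1))
          = (r : ℤ) * (((y : ℤ) - 1) * ((r : ℤ) - 1)) := by
        linear_combination (1 - (lam : ℤ)) * h1' - (r : ℤ) * h2'
      have hk2 : (2 : ℤ) ≤ (k : ℤ) := by
        by_contra hcon
        have hk1 : (k : ℤ) = 1 := by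
          have : (1 : ℤ) ≤ (k : ℤ) := by exact_mod_cast hk
          omega
        rw [hk1] at h1'
        simp at h1'
        rcases h1' with h | h <;> omega
      have hL : (lam : ℤ) - 1 ≤ ((y : ℤ) - 1) * ((r : ℤ) - 1) := by
        calc (lam : ℤ) - 1 ≤ ((k : ℤ) - 1) * ((lam : ℤ) - 1) :=
              le_mul_of_one_le_left (by linarith) (by linarith)
          _ = ((y : ℤ) - 1) * ((r : ℤ) - 1) := h2'.symm
      obtain ⟨c, hc⟩ := hgl
      have hc1 : 1 ≤ c := by
        rcases Nat.eq_zero_or_pos c with h0 | h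
        · subst h0; simp at hc; omega
        · exact h
      rcases eq_or_lt_of_le hc1 with hce | hc2
      · -- c = 1 : g = lam, lam ∣ r
        have hce' : c = 1 := hce.symm
        have hglam : g = lam := by subst hce'; simpa using hc.symm
        obtain ⟨m, hm⟩ : lam ∣ r := hglam ▸ hglr
        have hm1 : 1 ≤ m := by
          rcases Nat.eq_zero_or_pos m with h0 | h
          · subst h0; simp at hm; omega
          · exact h
        have hm1' : (1 : ℤ) ≤ (m : ℤ) := by exact_mod_cast hm1
        have hmr : (r : ℤ) = (lam : ℤ) * (m : ℤ) := by exact_mod_cast hm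
        have Ecan : ((lam : ℤ) - 1) * ((v : ℤ) - 1)
            = (m : ℤ) * (((y : ℤ) - 1) * ((lam : ℤ) * (m : ℤ) - 1)) := by
          have hl0 : (lam : ℤ) ≠ 0 := by linarith
          apply mul_left_cancel₀ hl0
          rw [E, hmr]; ring
        have hvb : (v : ℤ) ≤ 2 * ((y : ℤ) - 1) * (m : ℤ) ^ 2 := by
          rcases eq_or_lt_of_le hl2 with hle | hl3
          · -- lam = 2
            have heq : (v : ℤ) = (m : ℤ) * (((y : ℤ) - 1) * (2 * (m : ℤ) - 1)) + 1 := by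
              linear_combination Ecan + ((v : ℤ) - 1 - (m : ℤ) ^ 2 * ((y : ℤ) - 1)) * hle
            have hym : (1 : ℤ) ≤ ((y : ℤ) - 1) * (m : ℤ) := by
              have := mul_le_mul (by linarith : (1 : ℤ) ≤ (y : ℤ) - 1) hm1'
                (by norm_num) (by linarith)
              linarith
            have hexp : 2 * ((y : ℤ) - 1) * (m : ℤ) ^ 2
                - ((m : ℤ) * (((y : ℤ) - 1) * (2 * (m : ℤ) - 1)) + 1)
                = ((y : ℤ) - 1) * (m : ℤ) - 1 := by ring
            linarith [heq, hexp, hym]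
          · -- lam ≥ 3
            have hLm : (lam : ℤ) - 1 ≤ ((y : ℤ) - 1) * ((lam : ℤ) * (m : ℤ) - 1) := by
              rw [hmr] at hL
              linarith [hL]
            have hfac : (0 : ℤ) ≤ ((y : ℤ) - 1) * (((m : ℤ) - 1) * ((m : ℤ) * ((lam : ℤ) - 2) - 1)) := by
              apply mul_nonneg (by linarith)
              apply mul_nonneg (by linarith)
              have := mul_le_mul hm1' (by linarith : (1 : ℤ) ≤ (lam : ℤ) - 2)
                (by norm_num) (by linarith)
              linarith
            have hid : ((lam : ℤ) - 1) * (2 * ((y : ℤ) - 1) * (m : ℤ) ^ 2 - (v : ℤ))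
                = ((y : ℤ) - 1) * (((m : ℤ) - 1) * ((m : ℤ) * ((lam : ℤ) - 2) - 1))
                  + (((y : ℤ) - 1) * ((lam : ℤ) * (m : ℤ) - 1) - ((lam : ℤ) - 1)) := by
              linear_combination -Ecan
            have hprod : ((lam : ℤ) - 1) * 0 ≤ ((lam : ℤ) - 1) * (2 * ((y : ℤ) - 1) * (m : ℤ) ^ 2 - (v : ℤ)) := by
              rw [hid]; linarith [hfac, hLm]
            have hS := le_of_mul_le_mul_left hprod (by linarith : (0 : ℤ) < (lam : ℤ) - 1)
            linarith [hS]
        have hglam' : (g : ℤ) = (lam : ℤ) := by exact_mod_cast hglam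
        rw [hglam', hmr]
        calc (v : ℤ) * (lam : ℤ) ^ 2
            ≤ 2 * ((y : ℤ) - 1) * (m : ℤ) ^ 2 * (lam : ℤ) ^ 2 :=
              mul_le_mul_of_nonneg_right hvb (by positivity)
          _ = 2 * ((y : ℤ) - 1) * ((lam : ℤ) * (m : ℤ)) ^ 2 := by ring
      · -- c ≥ 2 : 2g ≤ lam
        have h2g : 2 * (g : ℤ) ≤ (lam : ℤ) := by
          have h2g' : 2 * g ≤ lam := by
            calc 2 * g = g * 2 := by ring
              _ ≤ g * c := Nat.mul_le_mul_left _ hc2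
              _ = lam := hc.symm
          exact_mod_cast h2g'
        have hA : 4 * (g : ℤ) ^ 2 ≤ (lam : ℤ) ^ 2 := by
          have h := pow_le_pow_left₀ (by linarith : (0 : ℤ) ≤ 2 * (g : ℤ)) h2g 2
          have h4 : (2 * (g : ℤ)) ^ 2 = 4 * (g : ℤ) ^ 2 := by ring
          linarith [h, h4]
        have hB : (lam : ℤ) ^ 2 ≤ 2 * ((lam : ℤ) * ((lam : ℤ) - 1)) := by
          have := mul_nonneg (by linarith : (0 : ℤ) ≤ (lam : ℤ))
            (by linarith : (0 : ℤ) ≤ (lam : ℤ) - 2)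
          linarith [this]
        have hC : 4 * (g : ℤ) ^ 2 * ((v : ℤ) - 1)
            ≤ 2 * ((lam : ℤ) * (((lam : ℤ) - 1) * ((v : ℤ) - 1))) := by
          have h := mul_le_mul_of_nonneg_right (hA.trans hB)
            (by linarith : (0 : ℤ) ≤ (v : ℤ) - 1)
          linarith [h]
        have hD : 4 * (g : ℤ) ^ 2 * ((v : ℤ) - 1)
            ≤ 2 * ((y : ℤ) - 1) * (r : ℤ) ^ 2 - 2 * ((y : ℤ) - 1) * (r : ℤ) := by
          calc 4 * (g : ℤ) ^ 2 * ((v : ℤ) - 1)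
              ≤ 2 * ((lam : ℤ) * (((lam : ℤ) - 1) * ((v : ℤ) - 1))) := hC
            _ = 2 * ((r : ℤ) * (((y : ℤ) - 1) * ((r : ℤ) - 1))) := by rw [E]
            _ = 2 * ((y : ℤ) - 1) * (r : ℤ) ^ 2 - 2 * ((y : ℤ) - 1) * (r : ℤ) := by ring
        have hYr : 0 ≤ ((y : ℤ) - 1) * (r : ℤ) := mul_nonneg (by linarith) (by linarith)
        linarith [hD, hg2r2, hr2y, hYr, sq_nonneg (r : ℤ)]
  have hq : (0 : ℚ) < ((g : ℚ)) ^ 2 := by positivity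
  rw [le_div_iff₀ hq]
  exact_mod_cast keyZ
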